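/- Let z*, ρ, δ, γ be reals with 0 < ρ < 1 and 0 < δ ≤ γ, let m ≥ 1 be an integer with m·γ/δ > 1, and let (x^k)_{k≥0} be a sequence of vectors in ℝ^n whose gaps g_k (given reals with g_k = c·x^k − z*) satisfy g_{k+1} ≤ (1 − ρ)·g_k for all k and g_t > 0 for a fixed index t. Suppose the index j̄ satisfies 0 < x^t_{j̄} ≤ γ and x^{t+r}_{j̄} ≤ m·x^t_{j̄}·g_{t+r}/g_t for every integer r ≥ 0. Then x^{t+r}_{j̄} ≤ m·γ·(1 − ρ)^r for every r ≥ 0. Moreover, if additionally every strictly positive entry of x^{t+r} is at least δ, x^{t+r}_{j̄} ≥ 0, and r ≥ 1 with r ≥ (1/ρ)·log(m·γ/δ), then x^{t+r}_{j̄} = 0. -/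

import Mathlib

open Matrix

/-- **Variable-fixing step in Theorem 5.** If the gaps `g k = c⬝x^k − z*` contract by the
factor `1 − ρ`, `g t > 0`, and `j̄` satisfies `0 < x^t j̄ ≤ γ` together with the conclusion
of Lemma 4, then `x^{t+r} j̄ ≤ m·γ·(1−ρ)^r` for all `r ≥ 0`; moreover if every positive
entry of `x^{t+r}` is at least `δ`, `x^{t+r} j̄ ≥ 0` and `r ≥ max(1, (1/ρ)·log(mγ/δ))`,
then `x^{t+r} j̄ = 0`. -/
theorem variable_fixing
    {n : ℕ} (c : Fin n → ℝ) (zstar ρ δ γ : ℝ)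
    (hρ0 : 0 < ρ) (hρ1 : ρ < 1) (hδ : 0 < δ) (hδγ : δ ≤ γ)
    (m : ℕ) (hm : 1 ≤ m) (hmγδ : 1 < (m : ℝ) * γ / δ)
    (x : ℕ → Fin n → ℝ) (g : ℕ → ℝ) (hg : ∀ k, g k = c ⬝ᵥ x k - zstar)
    (hcontr : ∀ k, g (k + 1) ≤ (1 - ρ) * g k)
    (t : ℕ) (hgt : 0 < g t)
    (jbar : Fin n) (hj1 : 0 < x t jbar) (hj2 : x t jbar ≤ γ)
    (hlem4 : ∀ r : ℕ, x (t + r) jbar ≤ m * x t jbar * g (t + r) / g t) :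
    (∀ r : ℕ, x (t + r) jbar ≤ (m : ℝ) * γ * (1 - ρ) ^ r) ∧
    (∀ r : ℕ, (∀ j, 0 < x (t + r) j → δ ≤ x (t + r) j) → 0 ≤ x (t + r) jbar →
      1 ≤ r → (1 / ρ) * Real.log ((m : ℝ) * γ / δ) ≤ (r : ℝ) → x (t + r) jbar = 0) := by
  have hρ' : (0:ℝ) < 1 - ρ := by linarith
  have hm0 : (0:ℝ) < (m:ℝ) := by exact_mod_cast Nat.lt_of_lt_of_le Nat.zero_lt_one hm
  have hmγ : δ < (m:ℝ) * γ := by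
    have := (one_lt_div hδ).mp hmγδ
    linarith
  -- gap contraction iterated
  have hgr : ∀ r : ℕ, g (t + r) ≤ (1 - ρ) ^ r * g t := by
    intro r
    induction r with
    | zero => simp
    | succ r ih =>
      calc g (t + (r+1)) = g ((t + r) + 1) := by ring_nf
        _ ≤ (1 - ρ) * g (t + r) := hcontr _
        _ ≤ (1 - ρ) * ((1 - ρ) ^ r * g t) := by nlinarith
        _ = (1 - ρ) ^ (r+1) * g t := by ring
  have main : ∀ r : ℕ, x (t + r) jbar ≤ (m : ℝ) * γ * (1 - ρ) ^ r := by
    intro r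
    have h1 := hlem4 r
    have h2 := hgr r
    have hgt' : g t ≠ 0 := ne_of_gt hgt
    have hmx : (0:ℝ) ≤ (m:ℝ) * x t jbar := by positivity
    have h3 : (m:ℝ) * x t jbar * g (t + r) ≤ (m:ℝ) * x t jbar * ((1 - ρ) ^ r * g t) :=
      mul_le_mul_of_nonneg_left h2 hmx
    have hmid : (m:ℝ) * x t jbar * g (t + r) / g t ≤ (m:ℝ) * x t jbar * (1 - ρ) ^ r := by
      rw [div_le_iff₀ hgt]
      linarith [h3]
    calc x (t + r) jbar ≤ (m:ℝ) * x t jbar * g (t + r) / g t := h1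
      _ ≤ (m:ℝ) * x t jbar * (1 - ρ) ^ r := hmid
      _ ≤ (m:ℝ) * γ * (1 - ρ) ^ r :=
          mul_le_mul_of_nonneg_right (mul_le_mul_of_nonneg_left hj2 hm0.le) (pow_pos hρ' r).le
  refine ⟨main, ?_⟩
  intro r hpos hnn hr1 hrlog
  by_contra hne
  have hxpos : 0 < x (t + r) jbar := lt_of_le_of_ne hnn (Ne.symm hne)
  have hδx : δ ≤ x (t + r) jbar := hpos _ hxpos
  -- show m γ (1-ρ)^r < δ
  have hlog : Real.log (1 - ρ) < -ρ := by
    have h := Real.add_one_lt_exp (x := -ρ) (by linarith)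
    have : 1 - ρ < Real.exp (-ρ) := by linarith
    calc Real.log (1 - ρ) < Real.log (Real.exp (-ρ)) :=
          Real.log_lt_log hρ' this
      _ = -ρ := Real.log_exp _
  have hr0 : (0:ℝ) < (r:ℝ) := by exact_mod_cast hr1
  have hlogpow : Real.log ((1 - ρ) ^ r) < -Real.log ((m:ℝ) * γ / δ) := by
    rw [Real.log_pow]
    have h1 : (r:ℝ) * Real.log (1 - ρ) < (r:ℝ) * (-ρ) := by
      exact (mul_lt_mul_iff_right₀ hr0).mpr hlog
    have h2 : Real.log ((m:ℝ) * γ / δ) ≤ ρ * r := by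
      have h := hrlog
      rw [div_mul_eq_mul_div, div_le_iff₀ hρ0] at h
      linarith
    nlinarith
  have hkey : (m:ℝ) * γ * (1 - ρ) ^ r < δ := by
    have hmγpos : (0:ℝ) < (m:ℝ) * γ := lt_trans hδ hmγ
    have hq : (0:ℝ) < (m:ℝ) * γ / δ := div_pos hmγpos hδ
    have : (1 - ρ) ^ r < Real.exp (-Real.log ((m:ℝ) * γ / δ)) := by
      have := Real.exp_lt_exp.mpr hlogpow
      rwa [Real.exp_log (pow_pos hρ' r)] at this
    rw [Real.exp_neg, Real.exp_log hq] at this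
    have h3 : (1 - ρ) ^ r < δ / ((m:ℝ) * γ) := by
      rwa [inv_div] at this
    calc (m:ℝ) * γ * (1 - ρ) ^ r < (m:ℝ) * γ * (δ / ((m:ℝ) * γ)) := by
          exact (mul_lt_mul_iff_right₀ hmγpos).mpr h3
      _ = δ := by field_simp [(lt_of_lt_of_le hδ hδγ).ne']
  have := main r
  linarith
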